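/- For every positive integer k there exists a binary, equireplicate 2k×2k row-column design A on 4k symbols with replication number k such that |R_i(A) ∩ C_j(A)| = k for every row index i and column index j; that is, a (4k, k, −, −, k : 2k × 2k) AO-array exists for every positive integer k. -/

import Mathlib

open Finset

/-- A row-column design `A` is *binary* if each row map and each column map is injective. -/
def IsBinary {ρ γ σ : Type*} (A : ρ × γ → σ) : Prop :=
  (∀ i : ρ, Function.Injective fun j : γ => A (i, j)) ∧
  (∀ j : γ, Function.Injective fun i : ρ => A (i, j))

/-- A row-column design `A` is *equireplicate* with replication number `e` if every
symbol occurs in exactly `e` cells. -/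
def IsEquireplicate {ρ γ σ : Type*} [Fintype ρ] [Fintype γ] [DecidableEq σ]
    (A : ρ × γ → σ) (e : ℕ) : Prop :=
  ∀ x : σ, (Finset.univ.filter fun p : ρ × γ => A p = x).card = e

/-- The set of symbols occurring in row `i`. -/
def rowSet {ρ γ σ : Type*} [Fintype γ] [DecidableEq σ] (A : ρ × γ → σ) (i : ρ) : Finset σ :=
  Finset.image (fun j : γ => A (i, j)) Finset.univ

/-- The set of symbols occurring in column `j`. -/
def colSet {ρ γ σ : Type*} [Fintype ρ] [DecidableEq σ] (A : ρ × γ → σ) (j : γ) : Finset σ :=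
  Finset.image (fun i : ρ => A (i, j)) Finset.univ

section Aux
variable (k : ℕ) [NeZero k]

instance : NeZero (2*k) := ⟨by have := NeZero.ne k; omega⟩

def DD (p : Fin (2*k) × Fin (2*k)) : Fin (4*k) :=
  ⟨(if p.2.val < k then 0 else 2*k) + (p.1 + p.2 : Fin (2*k)).val, by
     have := (p.1 + p.2 : Fin (2*k)).isLt; split_ifs <;> omega⟩

variable {k}

lemma DD_val (p : Fin (2*k) × Fin (2*k)) :
    (DD k p).val = (if p.2.val < k then 0 else 2*k) + (p.1 + p.2 : Fin (2*k)).val := rfl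

lemma DD_block (p : Fin (2*k) × Fin (2*k)) : (DD k p).val < 2*k ↔ p.2.val < k := by
  have := (p.1 + p.2 : Fin (2*k)).isLt
  rw [DD_val]; split_ifs with h <;> simp [h] <;> omega

lemma cardlt : (univ.filter fun j : Fin (2*k) => j.val < k).card = k := by
  have hkk : k ≤ 2*k := by omega
  have : (univ.filter fun j : Fin (2*k) => j.val < k)
      = Finset.map ⟨Fin.castLE hkk, Fin.castLE_injective hkk⟩ univ := by
    ext x
    simp only [mem_filter, mem_univ, true_and, mem_map, Function.Embedding.coeFn_mk]
    constructor
    · intro hx; exact ⟨⟨x.val, hx⟩, rfl⟩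
    · rintro ⟨t, rfl⟩; exact t.isLt
  rw [this, card_map, card_univ, Fintype.card_fin]

lemma cardge : (univ.filter fun j : Fin (2*k) => ¬ j.val < k).card = k := by
  have h := Finset.card_filter_add_card_filter_not
    (s := (univ : Finset (Fin (2*k)))) (p := fun j : Fin (2*k) => j.val < k)
  rw [cardlt, card_univ, Fintype.card_fin] at h
  omega

lemma cardiff (c : Prop) [Decidable c] :
    (univ.filter fun j : Fin (2*k) => (j.val < k ↔ c)).card = k := by
  by_cases hc : c
  · simp only [hc, iff_true]; exact cardlt
  · simp only [hc, iff_false]; exact cardge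

lemma xsplit (x : Fin (4*k)) :
    (if x.val < 2*k then 0 else 2*k) + x.val % (2*k) = x.val := by
  have h4 := x.isLt
  have h2 : 0 < 2*k := Nat.pos_of_ne_zero (NeZero.ne _)
  split_ifs with h
  · simp [Nat.mod_eq_of_lt h]
  · rw [Nat.mod_eq_sub_mod (by omega), Nat.mod_eq_of_lt (by omega)]; omega

end Aux

/-- For every positive integer k there exists a binary, equireplicate
2k×2k row-column design on 4k symbols with replication number k, all of whose
row-column intersections have size k; that is, a (4k, k, −, −, k : 2k × 2k) AO-array
exists. -/
theorem stmt9 (k : ℕ) (hk : 0 < k) :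
    ∃ A : Fin (2 * k) × Fin (2 * k) → Fin (4 * k),
      IsBinary A ∧ IsEquireplicate A k ∧
      ∀ i j : Fin (2 * k), (rowSet A i ∩ colSet A j).card = k := by
  haveI : NeZero k := ⟨hk.ne'⟩
  refine ⟨DD k, ⟨?_, ?_⟩, ?_, ?_⟩
  · -- rows injective
    intro i j1 j2 h
    simp only at h
    have hb : (j1.val < k) ↔ (j2.val < k) := by
      rw [← DD_block (k := k) (i, j1), ← DD_block (k := k) (i, j2), h]
    have hv := congrArg Fin.val h
    rw [DD_val, DD_val] at hv
    simp only at hv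
    have hsum : (i + j1 : Fin (2*k)) = i + j2 := by
      apply Fin.ext
      by_cases h1 : j1.val < k
      · have h2 : j2.val < k := hb.mp h1
        simpa [h1, h2] using hv
      · have h2 : ¬ j2.val < k := fun h' => h1 (hb.mpr h')
        simp only [h1, h2, if_neg, not_false_iff] at hv
        omega
    exact add_left_cancel hsum
  · -- columns injective
    intro j i1 i2 h
    simp only at h
    have hv := congrArg Fin.val h
    rw [DD_val, DD_val] at hv
    simp only at hv
    have hsum : (i1 + j : Fin (2*k)) = i2 + j := Fin.ext (by omega)
    exact add_right_cancel hsum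
  · -- equireplicate
    intro x
    set x' : Fin (2*k) := ⟨x.val % (2*k), Nat.mod_lt _ (Nat.pos_of_ne_zero (NeZero.ne _))⟩
      with hx'
    have hEq : (univ.filter fun p : Fin (2*k) × Fin (2*k) => DD k p = x)
        = Finset.image (fun j => ((x' - j, j) : Fin (2*k) × Fin (2*k)))
            (univ.filter fun j : Fin (2*k) => (j.val < k ↔ x.val < 2*k)) := by
      ext p
      simp only [mem_filter, mem_univ, true_and, mem_image]
      constructor
      · intro hp
        refine ⟨p.2, ?_, ?_⟩
        · rw [← hp]; exact (DD_block p).symm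
        · have hv := congrArg Fin.val hp
          rw [DD_val] at hv
          have hblock : p.2.val < k ↔ x.val < 2*k := by rw [← hp]; exact (DD_block p).symm
          have hs := xsplit x
          have hxv : (p.1 + p.2 : Fin (2*k)).val = x.val % (2*k) := by
            by_cases h1 : p.2.val < k
            · have h2 := hblock.mp h1
              simp only [h1, if_true, h2] at hv hs; omega
            · have h2 : ¬ x.val < 2*k := fun h' => h1 (hblock.mpr h')
              simp only [h1, h2, if_neg, not_false_iff] at hv hs; omega
          have : p.1 + p.2 = x' := Fin.ext hxv
          have hp1 : p.1 = x' - p.2 := by rw [← this]; exact (add_sub_cancel_right _ _).symm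
          rw [← hp1]
      · rintro ⟨j, hj, rfl⟩
        apply Fin.ext
        rw [DD_val]
        simp only
        rw [sub_add_cancel]
        have : x'.val = x.val % (2*k) := rfl
        rw [this]
        have hs := xsplit x
        by_cases h1 : j.val < k
        · have h2 := hj.mp h1
          simp only [h1, if_true, h2] at hs ⊢; omega
        · have h2 : ¬ x.val < 2*k := fun h' => h1 (hj.mpr h')
          simp only [h1, h2, if_neg, not_false_iff] at hs ⊢; omega
    rw [hEq, Finset.card_image_of_injective _ (fun a b hab => (Prod.mk.injEq _ _ _ _ ▸ hab).2
      |> fun h => h)]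
    · exact cardiff _
  · -- intersections
    intro i j
    have hrow : Function.Injective fun j' : Fin (2*k) => DD k (i, j') := by
      intro j1 j2 h
      simp only at h
      have hb : (j1.val < k) ↔ (j2.val < k) := by
        rw [← DD_block (k := k) (i, j1), ← DD_block (k := k) (i, j2), h]
      have hv := congrArg Fin.val h
      rw [DD_val, DD_val] at hv
      simp only at hv
      have hsum : (i + j1 : Fin (2*k)) = i + j2 := by
        apply Fin.ext
        by_cases h1 : j1.val < k
        · have h2 : j2.val < k := hb.mp h1
          simpa [h1, h2] using hv
        · have h2 : ¬ j2.val < k := fun h' => h1 (hb.mpr h')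
          simp only [h1, h2, if_neg, not_false_iff] at hv
          omega
      exact add_left_cancel hsum
    have hEq : rowSet (DD k) i ∩ colSet (DD k) j
        = Finset.image (fun j' => DD k (i, j'))
            (univ.filter fun j' : Fin (2*k) => (j'.val < k ↔ j.val < k)) := by
      ext x
      simp only [rowSet, colSet, mem_inter, mem_image, mem_univ, true_and, mem_filter]
      constructor
      · rintro ⟨⟨j', rfl⟩, ⟨i', hi'⟩⟩
        refine ⟨j', ?_, rfl⟩
        have h1 : j'.val < k ↔ (DD k (i, j')).val < 2*k := (DD_block (k := k) (i, j')).symm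
        have h2 : j.val < k ↔ (DD k (i', j)).val < 2*k := (DD_block (k := k) (i', j)).symm
        rw [hi'] at h2
        rw [h1, h2]
      · rintro ⟨j', hj', rfl⟩
        refine ⟨⟨j', rfl⟩, ⟨i + j' - j, ?_⟩⟩
        apply Fin.ext
        rw [DD_val, DD_val]
        simp only
        rw [sub_add_cancel]
        by_cases h1 : j.val < k
        · have h2 := hj'.mpr h1
          simp [h1, h2]
        · have h2 : ¬ j'.val < k := fun h' => h1 (hj'.mp h')
          simp [h1, h2]
    rw [hEq, Finset.card_image_of_injective _ hrow]
    exact cardiff _
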